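/- For $z, w \in \mathbb{C}^4$ with $|z_i| = |w_i|$ for all $i$ and $|\phi_z| = |\phi_w| \pmod{2\pi}$, where $\phi_z = (\arg z_1 + \arg z_4) - (\arg z_2 + \arg z_3)$, we have $\|z\|_{\mathsf{X}} = \|w\|_{\mathsf{X}}$. -/

import Mathlib

open Complex Real

noncomputable def Xfun (z : Fin 4 → ℂ) (σ : ℝ) : ℝ :=
  ‖z 0 * Complex.exp (σ * Complex.I) + (starRingEnd ℂ) (z 3)‖ +
  ‖z 1 * Complex.exp (σ * Complex.I) + (starRingEnd ℂ) (z 2)‖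

noncomputable def Xnorm (z : Fin 4 → ℂ) : ℝ := ⨆ σ : ℝ, Xfun z σ

noncomputable def phase (z : Fin 4 → ℂ) : ℝ :=
  (Complex.arg (z 0) + Complex.arg (z 3)) - (Complex.arg (z 1) + Complex.arg (z 2))

noncomputable def F (θ r₁ r₂ : ℝ) : ℝ :=
  ‖(r₁ : ℂ) * Complex.exp (θ * Complex.I) + (r₂ : ℂ)‖

lemma F_period (θ r₁ r₂ : ℝ) (k : ℤ) : F (θ + 2 * π * k) r₁ r₂ = F θ r₁ r₂ := by
  unfold F
  congr 2
  push_cast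
  rw [add_mul, Complex.exp_add]
  rw [show ((2:ℂ) * π * k * Complex.I) = k * (2 * π * Complex.I) by ring,
    Complex.exp_int_mul_two_pi_mul_I, mul_one]

lemma F_neg (θ r₁ r₂ : ℝ) : F (-θ) r₁ r₂ = F θ r₁ r₂ := by
  unfold F
  rw [← Complex.norm_conj ((r₁ : ℂ) * Complex.exp (θ * Complex.I) + (r₂ : ℂ))]
  congr 1
  simp [map_add, map_mul, Complex.conj_ofReal, ← Complex.exp_conj]

lemma absA (a b : ℂ) (σ : ℝ) :
    ‖a * Complex.exp (σ * Complex.I) + (starRingEnd ℂ) b‖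
      = F (a.arg + b.arg + σ) (‖a‖) (‖b‖) := by
  set A := a.arg with hA
  set B := b.arg with hB
  set ra := ‖a‖ with hra
  set rb := ‖b‖ with hrb
  have ha : (ra : ℂ) * Complex.exp (A * Complex.I) = a := Complex.norm_mul_exp_arg_mul_I a
  have hb : (rb : ℂ) * Complex.exp (B * Complex.I) = b := Complex.norm_mul_exp_arg_mul_I b
  rw [← ha, ← hb]
  unfold F
  have key : Complex.exp ((B:ℂ) * Complex.I) *
      ((ra:ℂ) * Complex.exp (A * Complex.I) * Complex.exp (σ * Complex.I)
        + (starRingEnd ℂ) ((rb:ℂ) * Complex.exp (B * Complex.I)))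
      = (ra:ℂ) * Complex.exp (((A + B + σ : ℝ):ℂ) * Complex.I) + rb := by
    have hc : (starRingEnd ℂ) ((rb:ℂ) * Complex.exp (B * Complex.I))
        = (rb:ℂ) * Complex.exp (-((B:ℂ) * Complex.I)) := by
      simp [map_mul, Complex.conj_ofReal, ← Complex.exp_conj]
    rw [hc]
    push_cast
    rw [show ((A:ℂ) + B + σ) * Complex.I
        = A * Complex.I + B * Complex.I + σ * Complex.I by ring,
      Complex.exp_add, Complex.exp_add, Complex.exp_neg]
    have hne := Complex.exp_ne_zero ((B:ℂ) * Complex.I)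
    field_simp
  calc ‖(ra:ℂ) * Complex.exp (A * Complex.I) * Complex.exp (σ * Complex.I)
        + (starRingEnd ℂ) ((rb:ℂ) * Complex.exp (B * Complex.I))‖
      = ‖Complex.exp ((B:ℂ) * Complex.I)‖ *
        ‖(ra:ℂ) * Complex.exp (A * Complex.I) * Complex.exp (σ * Complex.I)
          + (starRingEnd ℂ) ((rb:ℂ) * Complex.exp (B * Complex.I))‖ := by
        rw [Complex.norm_exp_ofReal_mul_I, one_mul]
    _ = ‖(ra:ℂ) * Complex.exp (((A + B + σ : ℝ):ℂ) * Complex.I) + rb‖ := by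
        rw [← norm_mul, key]

noncomputable def G (r : Fin 4 → ℝ) (φ σ : ℝ) : ℝ :=
  F (φ + σ) (r 0) (r 3) + F σ (r 1) (r 2)

noncomputable def N (r : Fin 4 → ℝ) (φ : ℝ) : ℝ := ⨆ σ : ℝ, G r φ σ

lemma iSup_comp_surj {f : ℝ → ℝ} (hf : Function.Surjective f) (g : ℝ → ℝ) :
    ⨆ x, g (f x) = ⨆ y, g y := by
  rw [iSup, iSup]
  exact congrArg sSup (Function.Surjective.range_comp hf g)

lemma Xnorm_eq_N (z : Fin 4 → ℂ) :
    Xnorm z = N (fun i => ‖z i‖) (phase z) := by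
  have h : ∀ σ : ℝ, Xfun z σ
      = G (fun i => ‖z i‖) (phase z) (σ + ((z 1).arg + (z 2).arg)) := by
    intro σ
    unfold Xfun G phase
    rw [absA, absA]
    congr 1 <;> congr 1 <;> ring
  unfold Xnorm N
  rw [show (⨆ σ : ℝ, Xfun z σ) = ⨆ σ : ℝ, G (fun i => ‖z i‖) (phase z)
      (σ + ((z 1).arg + (z 2).arg)) from iSup_congr h]
  exact iSup_comp_surj (Equiv.addRight ((z 1).arg + (z 2).arg)).surjective _

lemma N_period (r : Fin 4 → ℝ) (φ : ℝ) (k : ℤ) : N r (φ + 2 * π * k) = N r φ := by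
  unfold N G
  refine iSup_congr fun σ => ?_
  rw [show φ + 2 * π * k + σ = (φ + σ) + 2 * π * k by ring, F_period]

lemma N_neg (r : Fin 4 → ℝ) (φ : ℝ) : N r (-φ) = N r φ := by
  unfold N
  have h : ∀ σ : ℝ, G r (-φ) σ = G r φ (-σ) := by
    intro σ
    unfold G
    congr 1
    · rw [show -φ + σ = -(φ + -σ) by ring, F_neg]
    · rw [← F_neg (-σ), neg_neg]
  rw [iSup_congr h]
  exact iSup_comp_surj (Equiv.neg ℝ).surjective _

theorem stmt_4 (z w : Fin 4 → ℂ) (hmag : ∀ i, ‖z i‖ = ‖w i‖)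
    (hphase : ((phase z : Real.Angle) = (phase w : Real.Angle)) ∨
      ((phase z : Real.Angle) = -(phase w : Real.Angle))) :
    Xnorm z = Xnorm w := by
  have hr : (fun i => ‖z i‖) = fun i => ‖w i‖ :=
    funext hmag
  rw [Xnorm_eq_N, Xnorm_eq_N, hr]
  set r := fun i => ‖w i‖
  rcases hphase with h | h
  · rw [Real.Angle.angle_eq_iff_two_pi_dvd_sub] at h
    obtain ⟨k, hk⟩ := h
    rw [show phase z = phase w + 2 * π * k by linarith, N_period]
  · rw [← Real.Angle.coe_neg, Real.Angle.angle_eq_iff_two_pi_dvd_sub] at h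
    obtain ⟨k, hk⟩ := h
    rw [show phase z = -(phase w) + 2 * π * k by linarith, N_period, N_neg]
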